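/- arXiv:2403.10163 — 2 statements merged into one kernel-verified Lean document; each statement's English description precedes it below -/
import Mathlib

section
/- Let l ≥ 4 and let H be a disjoint union of t ≥ 2 vertex-disjoint paths, with n_i(H) denoting the number of vertices of the i-th longest path of H (n_i(H)=0 if H has fewer than i components). Then the graph K_2 + H (the join of an edge with H) contains C_{l,l} as a subgraph if and only if n_1(H)+n_2(H) ≥ 2l−3, or (n_1(H)+n_2(H) ≤ 2l−4 and n_1(H) ≥ l−1 and n_2(H)+n_3(H) ≥ l−2). -/
open SimpleGraph

/-- The adjacency spectral radius of a finite simple graph. -/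
noncomputable def specRad {V : Type*} [Fintype V] [DecidableEq V] (G : SimpleGraph V) : ℝ :=
  letI := Classical.decRel G.Adj
  sSup ((fun μ : ℝ => |μ|) '' spectrum ℝ (G.adjMatrix ℝ))

/-- `G` contains a copy of `H` as a subgraph. -/
def Contains {V W : Type*} (G : SimpleGraph V) (H : SimpleGraph W) : Prop :=
  ∃ f : W ↪ V, ∀ a b, H.Adj a b → G.Adj (f a) (f b)

/-- `G` contains `C_{l,l}`: two cycles of length `l` sharing exactly one vertex. -/
def ContainsCll {V : Type*} (G : SimpleGraph V) (l : ℕ) : Prop :=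
  ∃ (u : V) (c₁ c₂ : G.Walk u u), c₁.IsCycle ∧ c₂.IsCycle ∧ c₁.length = l ∧ c₂.length = l ∧
    ∀ v, v ∈ c₁.support → v ∈ c₂.support → v = u

/-- Theta graph on `k` vertices: the cycle `0,1,…,k-1` plus a chord from `0` to `a`. -/
def thetaGraph (k a : ℕ) : SimpleGraph (Fin k) :=
  SimpleGraph.fromRel (fun i j =>
    (j : ℕ) = (i : ℕ) + 1 ∨ ((i : ℕ) = k - 1 ∧ (j : ℕ) = 0) ∨ ((i : ℕ) = 0 ∧ (j : ℕ) = a))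

/-- `G` contains some member of `Θ_k`, the set of Theta graphs on `k` vertices. -/
def ContainsTheta {V : Type*} (G : SimpleGraph V) (k : ℕ) : Prop :=
  ∃ a, 2 ≤ a ∧ a ≤ k - 2 ∧ Contains G (thetaGraph k a)

/-- The join of two graphs: all edges between the two vertex sets are added. -/
def joinG {V W : Type*} (G : SimpleGraph V) (H : SimpleGraph W) : SimpleGraph (V ⊕ W) where
  Adj a b := match a, b with
    | Sum.inl a, Sum.inl b => G.Adj a b
    | Sum.inr a, Sum.inr b => H.Adj a b
    | Sum.inl _, Sum.inr _ => True
    | Sum.inr _, Sum.inl _ => True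
  symm := by
    constructor
    rintro (a | a) (b | b) h
    · exact G.adj_symm h
    · trivial
    · trivial
    · exact H.adj_symm h
  loopless := by
    constructor
    rintro (a | a) h
    · exact G.loopless.irrefl a h
    · exact H.loopless.irrefl a h

/-- The disjoint union of `t` paths, the `i`-th having `f i` vertices. -/
def pathsUnion (t : ℕ) (f : ℕ → ℕ) : SimpleGraph (Σ i : Fin t, Fin (f i.1)) where
  Adj a b := a.1 = b.1 ∧ ((a.2 : ℕ) + 1 = (b.2 : ℕ) ∨ (b.2 : ℕ) + 1 = (a.2 : ℕ))
  symm := by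
    constructor
    rintro ⟨i, a⟩ ⟨j, b⟩ ⟨h₁, h₂⟩
    exact ⟨h₁.symm, h₂.symm⟩
  loopless := by
    constructor
    rintro ⟨i, a⟩ ⟨-, h⟩
    omega

/-- `H` is a minor of `G`: disjoint connected branch sets, one for each vertex of `H`,
with edges of `G` between branch sets corresponding to edges of `H`. -/
def IsMinor {V W : Type*} (H : SimpleGraph W) (G : SimpleGraph V) : Prop :=
  ∃ B : W → Set V, (∀ w, (B w).Nonempty) ∧ (∀ w, (G.induce (B w)).Connected) ∧
    (∀ w₁ w₂, w₁ ≠ w₂ → Disjoint (B w₁) (B w₂)) ∧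
    ∀ w₁ w₂, H.Adj w₁ w₂ → ∃ v₁ ∈ B w₁, ∃ v₂ ∈ B w₂, G.Adj v₁ v₂

/-- Planarity via Wagner's theorem: no `K₅` minor and no `K₃,₃` minor. -/
def IsPlanar {V : Type*} (G : SimpleGraph V) : Prop :=
  ¬ IsMinor (⊤ : SimpleGraph (Fin 5)) G ∧
  ¬ IsMinor (completeBipartiteGraph (Fin 3) (Fin 3)) G

variable {t : ℕ} {f : ℕ → ℕ}

/-- The join graph we study. -/
abbrev JG (t : ℕ) (f : ℕ → ℕ) : SimpleGraph (Fin 2 ⊕ Σ i : Fin t, Fin (f i.1)) :=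
  joinG (⊤ : SimpleGraph (Fin 2)) (pathsUnion t f)

abbrev VJ (t : ℕ) (f : ℕ → ℕ) := Fin 2 ⊕ Σ i : Fin t, Fin (f i.1)

lemma adjLR (a : Fin 2) (b : Σ i : Fin t, Fin (f i.1)) : (JG t f).Adj (Sum.inl a) (Sum.inr b) :=
  trivial

lemma adjRL (a : Fin 2) (b : Σ i : Fin t, Fin (f i.1)) : (JG t f).Adj (Sum.inr b) (Sum.inl a) :=
  trivial

lemma adjLL (a b : Fin 2) (h : a ≠ b) : (JG t f).Adj (Sum.inl a) (Sum.inl b) := h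

lemma adjRR {a b : Σ i : Fin t, Fin (f i.1)} :
    (JG t f).Adj (Sum.inr a) (Sum.inr b) ↔ (a.1 = b.1 ∧ ((a.2 : ℕ) + 1 = (b.2 : ℕ) ∨ (b.2 : ℕ) + 1 = (a.2 : ℕ))) :=
  Iff.rfl

/-- `v` lies in component `c`. -/
def InComp (c : Fin t) (v : VJ t f) : Prop := ∃ i, v = Sum.inr ⟨c, i⟩

lemma walk_comp' {x y : VJ t f} (p : (JG t f).Walk x y)
    (hall : ∀ v ∈ p.support, ∃ w, v = Sum.inr w) (c : Fin t) (hx : InComp c x) :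
    ∀ v ∈ p.support, InComp c v := by
  induction p with
  | nil => intro v hv; simp only [SimpleGraph.Walk.support_nil, List.mem_singleton] at hv; exact hv ▸ hx
  | @cons a b z h q ih =>
    have hb : InComp c b := by
      obtain ⟨i, rfl⟩ := hx
      obtain ⟨⟨cb, ib⟩, rfl⟩ := hall b (by simp)
      have hadj := (adjRR).mp h
      have : cb = c := hadj.1.symm
      subst this
      exact ⟨ib, rfl⟩
    intro v hv
    rw [SimpleGraph.Walk.support_cons, List.mem_cons] at hv
    rcases hv with rfl | hv
    · exact hx
    · exact ih (fun v hv => hall v (by simp [hv])) hb v hv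

lemma walk_comp {x y : VJ t f} (p : (JG t f).Walk x y)
    (hall : ∀ v ∈ p.support, ∃ w, v = Sum.inr w) :
    ∃ c : Fin t, ∀ v ∈ p.support, InComp c v := by
  obtain ⟨⟨c, i⟩, hx⟩ := hall x (SimpleGraph.Walk.start_mem_support p)
  exact ⟨c, walk_comp' p hall c ⟨i, hx⟩⟩

/-- index of a vertex (junk on hubs) -/
def iOf : VJ t f → ℕ := fun v => match v with
  | Sum.inl _ => 0
  | Sum.inr ⟨_, i⟩ => i.1

lemma card_le_comp (S : Finset (VJ t f)) (c : Fin t) (h : ∀ v ∈ S, InComp c v) :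
    S.card ≤ f c.1 := by
  classical
  have : S.card ≤ (Finset.range (f c.1)).card := by
    apply Finset.card_le_card_of_injOn iOf
    · intro v hv
      obtain ⟨i, rfl⟩ := h v hv
      simpa [iOf] using i.2
    · intro v hv w hw hvw
      obtain ⟨i, rfl⟩ := h v hv
      obtain ⟨j, rfl⟩ := h w hw
      simp only [iOf] at hvw
      have : i = j := Fin.ext hvw
      rw [this]
  simpa using this

open SimpleGraph.Walk in
lemma mem_tail_of_closed {V : Type*} {G : SimpleGraph V} {u : V} {c : G.Walk u u}
    (hne : c ≠ SimpleGraph.Walk.nil) : ∀ x, x ∈ c.support ↔ x ∈ c.support.tail := by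
  cases c with
  | nil => exact absurd rfl hne
  | @cons _ b _ h q =>
    intro x
    simp only [support_cons, List.tail_cons, List.mem_cons]
    constructor
    · rintro (rfl | hx)
      · exact q.end_mem_support
      · exact hx
    · intro hx; exact Or.inr hx

lemma mem_support_rotate {V : Type*} [DecidableEq V] {G : SimpleGraph V} {u v : V} {c : G.Walk u u}
    (hc : c.IsCycle) (h : v ∈ c.support) :
    ∀ x, x ∈ (c.rotate _ h).support ↔ x ∈ c.support := by
  intro x
  have hne : c ≠ SimpleGraph.Walk.nil := hc.ne_nil
  have hne' : c.rotate _ h ≠ SimpleGraph.Walk.nil := (hc.rotate h).ne_nil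
  rw [mem_tail_of_closed hne, mem_tail_of_closed hne']
  exact (SimpleGraph.Walk.support_rotate c _ h).mem_iff

lemma length_rotate {V : Type*} [DecidableEq V] {G : SimpleGraph V} {u v : V} (c : G.Walk u u)
    (h : v ∈ c.support) : (c.rotate _ h).length = c.length := by
  have := congrArg SimpleGraph.Walk.length (c.take_spec h)
  rw [SimpleGraph.Walk.length_append] at this
  show ((c.dropUntil v h).append (c.takeUntil v h)).length = c.length
  rw [SimpleGraph.Walk.length_append]
  omega

lemma isPath_loop_nil {V : Type*} {G : SimpleGraph V} {u : V} {p : G.Walk u u}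
    (hp : p.IsPath) : p = SimpleGraph.Walk.nil := by
  cases p with
  | nil => rfl
  | cons h q =>
    exfalso
    have := hp.support_nodup
    rw [SimpleGraph.Walk.support_cons, List.nodup_cons] at this
    exact this.1 q.end_mem_support

/-- decompose a nonempty walk from the far end -/
lemma exists_penult {V : Type*} {G : SimpleGraph V} {u v : V} (p : G.Walk u v)
    (hp : 1 ≤ p.length) :
    ∃ (z : V) (h : G.Adj v z) (q : G.Walk z u), p.reverse = SimpleGraph.Walk.cons h q := by
  have hnil : ¬ p.reverse.Nil := by
    rw [SimpleGraph.Walk.not_nil_iff_lt_length, SimpleGraph.Walk.length_reverse]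
    omega
  obtain ⟨z, h, q, hq⟩ := SimpleGraph.Walk.not_nil_iff.mp hnil
  exact ⟨z, h, q, hq⟩

lemma no_H_cycle {u : VJ t f} (c : (JG t f).Walk u u) (hc : c.IsCycle)
    (hall : ∀ v ∈ c.support, ∃ w, v = Sum.inr w) : False := by
  classical
  obtain ⟨v, hv', hmax'⟩ := Finset.exists_max_image c.support.toFinset iOf
    ⟨u, by simp⟩
  rw [List.mem_toFinset] at hv'
  have hmax : ∀ a ∈ c.support, iOf a ≤ iOf v := fun a ha => hmax' a (List.mem_toFinset.mpr ha)
  set c' := c.rotate _ hv' with hc'def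
  have hc' : c'.IsCycle := hc.rotate hv'
  have hmem : ∀ x, x ∈ c'.support ↔ x ∈ c.support := mem_support_rotate hc hv'
  have hlen : c'.length = c.length := length_rotate c hv'
  have h3 : 3 ≤ c'.length := hc'.three_le_length
  have hnil : ¬ c'.Nil := by rw [SimpleGraph.Walk.not_nil_iff_lt_length]; omega
  obtain ⟨w, h, p, hcp⟩ := SimpleGraph.Walk.not_nil_iff.mp hnil
  have hpl : 2 ≤ p.length := by
    have := congrArg SimpleGraph.Walk.length hcp
    rw [SimpleGraph.Walk.length_cons] at this
    omega
  have hpath : p.IsPath ∧ ¬ s(v, w) ∈ p.edges := by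
    rw [hcp, SimpleGraph.Walk.cons_isCycle_iff] at hc'
    exact hc'
  obtain ⟨z, h2, q, hq⟩ := exists_penult p (by omega)
  have hzw : z ≠ w := by
    rintro rfl
    have : (SimpleGraph.Walk.cons h2 q).IsPath := hq ▸ hpath.1.reverse
    have hq' : q = SimpleGraph.Walk.nil := isPath_loop_nil (this.of_cons)
    have := congrArg SimpleGraph.Walk.length hq
    rw [SimpleGraph.Walk.length_reverse, hq', SimpleGraph.Walk.length_cons] at this
    simp at this
    omega
  -- memberships
  have hwsup : w ∈ c.support := by
    rw [← hmem, hcp]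
    simp [SimpleGraph.Walk.support_cons]
  have hzsup : z ∈ c.support := by
    rw [← hmem, hcp]
    have : z ∈ p.reverse.support := by rw [hq]; simp
    rw [SimpleGraph.Walk.support_reverse, List.mem_reverse] at this
    simp [SimpleGraph.Walk.support_cons, this]
  obtain ⟨⟨cv, iv⟩, rfl⟩ := hall v hv'
  obtain ⟨⟨cw, iw⟩, rfl⟩ := hall w hwsup
  obtain ⟨⟨cz, iz⟩, rfl⟩ := hall z hzsup
  obtain ⟨hcc, hii⟩ := adjRR.mp h
  obtain ⟨hcc2, hii2⟩ := adjRR.mp h2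
  simp only at hcc hii hcc2 hii2
  obtain rfl : cv = cw := hcc
  obtain rfl : cv = cz := hcc2
  have h1 : iOf (Sum.inr (⟨cv, iw⟩ : Σ i : Fin t, Fin (f i.1))) ≤ iOf (Sum.inr (⟨cv, iv⟩ : Σ i : Fin t, Fin (f i.1))) := hmax _ hwsup
  have h2' : iOf (Sum.inr (⟨cv, iz⟩ : Σ i : Fin t, Fin (f i.1))) ≤ iOf (Sum.inr (⟨cv, iv⟩ : Σ i : Fin t, Fin (f i.1))) := hmax _ hzsup
  simp only [iOf] at h1 h2'
  have : iw = iz := by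
    apply Fin.ext
    omega
  exact hzw (by rw [this])

lemma single_hub {u : VJ t f} {c : (JG t f).Walk u u} (hc : c.IsCycle) {h0 : Fin 2}
    (hin : Sum.inl h0 ∈ c.support)
    (hone : ∀ a : Fin 2, Sum.inl a ∈ c.support → a = h0) :
    ∃ (j : Fin t) (S : Finset (VJ t f)), S.card + 1 = c.length ∧
      (∀ v ∈ S, InComp j v) ∧ (∀ v, v ∈ S ↔ (v ∈ c.support ∧ v ≠ Sum.inl h0)) := by
  classical
  set c' := c.rotate _ hin with hc'def
  have hc' : c'.IsCycle := hc.rotate hin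
  have hmem : ∀ x, x ∈ c'.support ↔ x ∈ c.support := mem_support_rotate hc hin
  have hlen : c'.length = c.length := length_rotate c hin
  have h3 : 3 ≤ c'.length := hc'.three_le_length
  have hnil : ¬ c'.Nil := by rw [SimpleGraph.Walk.not_nil_iff_lt_length]; omega
  obtain ⟨w, h, p, hcp⟩ := SimpleGraph.Walk.not_nil_iff.mp hnil
  have hpl : 2 ≤ p.length := by
    have := congrArg SimpleGraph.Walk.length hcp
    rw [SimpleGraph.Walk.length_cons] at this
    omega
  have hpath : p.IsPath := by
    rw [hcp, SimpleGraph.Walk.cons_isCycle_iff] at hc'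
    exact hc'.1
  obtain ⟨z, h2, q, hq⟩ := exists_penult p (by omega)
  have hqpath : q.IsPath := by
    have : (SimpleGraph.Walk.cons h2 q).IsPath := hq ▸ hpath.reverse
    exact this.of_cons
  have hpsup : p.support = q.support.reverse ++ [Sum.inl h0] := by
    have h1 : p.reverse.support = Sum.inl h0 :: q.support := by
      rw [hq, SimpleGraph.Walk.support_cons]
    have h2' : p.support.reverse = Sum.inl h0 :: q.support := by
      rw [← SimpleGraph.Walk.support_reverse, h1]
    calc p.support = p.support.reverse.reverse := by simp
    _ = (Sum.inl h0 :: q.support).reverse := by rw [h2']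
    _ = q.support.reverse ++ [Sum.inl h0] := by simp
  have hh0q : Sum.inl h0 ∉ q.support := by
    have : (SimpleGraph.Walk.cons h2 q).IsPath := hq ▸ hpath.reverse
    have := this.support_nodup
    rw [SimpleGraph.Walk.support_cons, List.nodup_cons] at this
    exact this.1
  have hqc : ∀ v ∈ q.support, v ∈ c.support := by
    intro v hv
    rw [← hmem, hcp, SimpleGraph.Walk.support_cons, List.mem_cons]
    right
    rw [hpsup]
    exact List.mem_append_left _ (List.mem_reverse.mpr hv)
  have hallq : ∀ v ∈ q.support, ∃ w, v = Sum.inr w := by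
    intro v hv
    match v with
    | Sum.inr w => exact ⟨w, rfl⟩
    | Sum.inl a =>
      exfalso
      have : a = h0 := hone a (hqc _ hv)
      exact hh0q (this ▸ hv)
  obtain ⟨j, hj⟩ := walk_comp q hallq
  refine ⟨j, q.support.toFinset, ?_, ?_, ?_⟩
  · have hnd : q.support.Nodup := hqpath.support_nodup
    rw [List.toFinset_card_of_nodup hnd, SimpleGraph.Walk.length_support]
    have := congrArg SimpleGraph.Walk.length hq
    rw [SimpleGraph.Walk.length_reverse, SimpleGraph.Walk.length_cons] at this
    have hcl := congrArg SimpleGraph.Walk.length hcp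
    rw [SimpleGraph.Walk.length_cons] at hcl
    omega
  · intro v hv
    exact hj v (List.mem_toFinset.mp hv)
  · intro v
    rw [List.mem_toFinset]
    constructor
    · intro hv
      refine ⟨hqc v hv, ?_⟩
      rintro rfl
      exact hh0q hv
    · rintro ⟨hvc, hvne⟩
      rw [← hmem, hcp, SimpleGraph.Walk.support_cons, List.mem_cons] at hvc
      rcases hvc with rfl | hvc
      · exact absurd rfl hvne
      · rw [hpsup] at hvc
        rcases List.mem_append.mp hvc with hvc | hvc
        · exact List.mem_reverse.mp hvc
        · simp at hvc
          exact absurd hvc hvne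

lemma fin2cases : ∀ a : Fin 2, a = 0 ∨ a = 1 := by decide

lemma strip_end (ht : 0 < t) {x y : VJ t f} (p : (JG t f).Walk x y) (hp : p.IsPath)
    (hall : ∀ v ∈ p.support, v ≠ y → ∃ w, v = Sum.inr w) :
    ∃ (j : Fin t) (S : Finset (VJ t f)), S.card = p.length ∧ (∀ v ∈ S, InComp j v) ∧
      (∀ v, v ∈ S ↔ (v ∈ p.support ∧ v ≠ y)) := by
  classical
  by_cases h0 : p.length = 0
  · obtain rfl : x = y := SimpleGraph.Walk.eq_of_length_eq_zero h0
    have hnil : p.Nil := SimpleGraph.Walk.nil_iff_length_eq.mpr h0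
    rw [hnil.eq_nil]
    refine ⟨⟨0, ht⟩, ∅, by simp, by simp, ?_⟩
    intro v
    simp only [Finset.notMem_empty, SimpleGraph.Walk.support_nil, List.mem_singleton, false_iff]
    rintro ⟨rfl, hne⟩
    exact hne rfl
  · obtain ⟨z, h2, q, hq⟩ := exists_penult p (by omega)
    have hqpath : q.IsPath := ((hq ▸ hp.reverse).of_cons)
    have hpsup : p.support = q.support.reverse ++ [y] := by
      have h1 : p.support.reverse = y :: q.support := by
        rw [← SimpleGraph.Walk.support_reverse, hq, SimpleGraph.Walk.support_cons]
      calc p.support = p.support.reverse.reverse := by simp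
      _ = (y :: q.support).reverse := by rw [h1]
      _ = q.support.reverse ++ [y] := by simp
    have hyq : y ∉ q.support := by
      have : (SimpleGraph.Walk.cons h2 q).IsPath := hq ▸ hp.reverse
      have := this.support_nodup
      rw [SimpleGraph.Walk.support_cons, List.nodup_cons] at this
      exact this.1
    have hallq : ∀ v ∈ q.support, ∃ w, v = Sum.inr w := by
      intro v hv
      refine hall v ?_ ?_
      · rw [hpsup]; exact List.mem_append_left _ (List.mem_reverse.mpr hv)
      · rintro rfl; exact hyq hv
    obtain ⟨j, hj⟩ := walk_comp q hallq
    refine ⟨j, q.support.toFinset, ?_, ?_, ?_⟩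
    · rw [List.toFinset_card_of_nodup hqpath.support_nodup, SimpleGraph.Walk.length_support]
      have := congrArg SimpleGraph.Walk.length hq
      rw [SimpleGraph.Walk.length_reverse, SimpleGraph.Walk.length_cons] at this
      omega
    · intro v hv; exact hj v (List.mem_toFinset.mp hv)
    · intro v
      rw [List.mem_toFinset]
      constructor
      · intro hv
        constructor
        · rw [hpsup]; exact List.mem_append_left _ (List.mem_reverse.mpr hv)
        · rintro rfl; exact hyq hv
      · rintro ⟨hvp, hvne⟩
        rw [hpsup] at hvp
        rcases List.mem_append.mp hvp with hvp | hvp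
        · exact List.mem_reverse.mp hvp
        · simp at hvp; exact absurd hvp hvne

lemma two_hub (ht : 0 < t) {u : VJ t f} {c : (JG t f).Walk u u} (hc : c.IsCycle)
    (h0in : Sum.inl 0 ∈ c.support) (h1in : Sum.inl 1 ∈ c.support) :
    ∃ (j k : Fin t) (S1 S2 : Finset (VJ t f)), Disjoint S1 S2 ∧
      S1.card + S2.card + 2 = c.length ∧
      (∀ v ∈ S1, InComp j v) ∧ (∀ v ∈ S2, InComp k v) ∧
      (∀ v, (v ∈ S1 ∨ v ∈ S2) → v ∈ c.support ∧ v ≠ Sum.inl 0 ∧ v ≠ Sum.inl 1) := by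
  classical
  set c' := c.rotate _ h0in with hc'def
  have hc' : c'.IsCycle := hc.rotate h0in
  have hmem : ∀ x, x ∈ c'.support ↔ x ∈ c.support := mem_support_rotate hc h0in
  have hlen : c'.length = c.length := length_rotate c h0in
  have h3 : 3 ≤ c'.length := hc'.three_le_length
  have hnil : ¬ c'.Nil := by rw [SimpleGraph.Walk.not_nil_iff_lt_length]; omega
  obtain ⟨w, h, p, hcp⟩ := SimpleGraph.Walk.not_nil_iff.mp hnil
  have hpath : p.IsPath := by
    rw [hcp, SimpleGraph.Walk.cons_isCycle_iff] at hc'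
    exact hc'.1
  have h01 : (Sum.inl 1 : VJ t f) ≠ Sum.inl 0 := by simp [Fin.ext_iff]
  have h1p : Sum.inl 1 ∈ p.support := by
    have : Sum.inl 1 ∈ c'.support := (hmem _).mpr h1in
    rw [hcp, SimpleGraph.Walk.support_cons, List.mem_cons] at this
    rcases this with h' | h'
    · exact absurd h' h01
    · exact h'
  set q1 := p.takeUntil (Sum.inl 1) h1p with hq1def
  set q2 := p.dropUntil (Sum.inl 1) h1p with hq2def
  have hspec : q1.append q2 = p := p.take_spec h1p
  have hsupp : p.support = q1.support ++ q2.support.tail := by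
    rw [← hspec, SimpleGraph.Walk.support_append]
  have hnd := hpath.support_nodup
  rw [hsupp, List.nodup_append] at hnd
  obtain ⟨hnd1, hnd2, hdisj⟩ := hnd
  have hq1path : q1.IsPath := hpath.takeUntil h1p
  have hq2path : q2.IsPath := hpath.dropUntil h1p
  have h0tail : (Sum.inl 0 : VJ t f) ∈ q2.support.tail :=
    SimpleGraph.Walk.end_mem_tail_support_of_ne h01 q2
  have h0q1 : (Sum.inl 0 : VJ t f) ∉ q1.support := fun hx => hdisj _ hx _ h0tail rfl
  -- S1 from q1
  have hall1 : ∀ v ∈ q1.support, v ≠ Sum.inl 1 → ∃ w, v = Sum.inr w := by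
    intro v hv hne
    match v with
    | Sum.inr w => exact ⟨w, rfl⟩
    | Sum.inl a =>
      exfalso
      rcases fin2cases a with rfl | rfl
      · exact h0q1 hv
      · exact hne rfl
  obtain ⟨j, S1, hS1card, hS1comp, hS1mem⟩ := strip_end ht q1 hq1path hall1
  -- S2 from q2 minus its first vertex
  have hq2nil : ¬ q2.Nil := SimpleGraph.Walk.not_nil_of_ne h01
  obtain ⟨z2, h3', r2, hq2eq⟩ := SimpleGraph.Walk.not_nil_iff.mp hq2nil
  have hr2path : r2.IsPath := by
    rw [hq2eq] at hq2path
    exact hq2path.of_cons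
  have hr2sup : q2.support.tail = r2.support := by
    rw [hq2eq, SimpleGraph.Walk.support_cons, List.tail_cons]
  have h1r2 : (Sum.inl 1 : VJ t f) ∉ r2.support := by
    rw [hq2eq] at hq2path
    have := hq2path.support_nodup
    rw [SimpleGraph.Walk.support_cons, List.nodup_cons] at this
    exact this.1
  have hall2 : ∀ v ∈ r2.support, v ≠ Sum.inl 0 → ∃ w, v = Sum.inr w := by
    intro v hv hne
    match v with
    | Sum.inr w => exact ⟨w, rfl⟩
    | Sum.inl a =>
      exfalso
      rcases fin2cases a with rfl | rfl
      · exact hne rfl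
      · exact h1r2 hv
  obtain ⟨k, S2, hS2card, hS2comp, hS2mem⟩ := strip_end ht r2 hr2path hall2
  -- memberships in c
  have hq1c : ∀ v ∈ q1.support, v ∈ c.support := by
    intro v hv
    rw [← hmem, hcp, SimpleGraph.Walk.support_cons, List.mem_cons]
    exact Or.inr (hsupp ▸ List.mem_append_left _ hv)
  have hr2c : ∀ v ∈ r2.support, v ∈ c.support := by
    intro v hv
    rw [← hmem, hcp, SimpleGraph.Walk.support_cons, List.mem_cons]
    refine Or.inr (hsupp ▸ List.mem_append_right _ ?_)
    rw [hr2sup]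
    exact hv
  refine ⟨j, k, S1, S2, ?_, ?_, hS1comp, hS2comp, ?_⟩
  · rw [Finset.disjoint_left]
    intro v hv1 hv2
    have h1 : v ∈ q1.support := ((hS1mem v).mp hv1).1
    have h2 : v ∈ r2.support := ((hS2mem v).mp hv2).1
    exact hdisj _ h1 _ (hr2sup ▸ h2) rfl
  · have e1 := congrArg SimpleGraph.Walk.length hspec
    rw [SimpleGraph.Walk.length_append] at e1
    have e2 := congrArg SimpleGraph.Walk.length hq2eq
    rw [SimpleGraph.Walk.length_cons] at e2
    have e3 := congrArg SimpleGraph.Walk.length hcp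
    rw [SimpleGraph.Walk.length_cons] at e3
    omega
  · intro v hv
    rcases hv with hv | hv
    · obtain ⟨hvs, hvne⟩ := (hS1mem v).mp hv
      exact ⟨hq1c v hvs, fun h' => h0q1 (h' ▸ hvs), hvne⟩
    · obtain ⟨hvs, hvne⟩ := (hS2mem v).mp hv
      exact ⟨hr2c v hvs, hvne, fun h' => h1r2 (h' ▸ hvs)⟩

lemma pair_bound01 {f : ℕ → ℕ} (hf : Antitone f) {i j : ℕ} (hij : i ≠ j) :
    f i + f j ≤ f 0 + f 1 := by
  rcases lt_or_gt_of_ne hij with h | h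
  · exact Nat.add_le_add (hf (Nat.zero_le i)) (hf (show 1 ≤ j by omega))
  · have := Nat.add_le_add (hf (Nat.zero_le j)) (hf (show 1 ≤ i by omega))
    omega

lemma pair_bound12 {f : ℕ → ℕ} (hf : Antitone f) {i j : ℕ} (hij : i ≠ j)
    (hi : 1 ≤ i) (hj : 1 ≤ j) : f i + f j ≤ f 1 + f 2 := by
  rcases lt_or_gt_of_ne hij with h | h
  · exact Nat.add_le_add (hf hi) (hf (show 2 ≤ j by omega))
  · have := Nat.add_le_add (hf hj) (hf (show 2 ≤ i by omega))
    omega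

lemma union_card_le_comp (S1 S2 : Finset (VJ t f)) (c : Fin t) (hd : Disjoint S1 S2)
    (h1 : ∀ v ∈ S1, InComp c v) (h2 : ∀ v ∈ S2, InComp c v) :
    S1.card + S2.card ≤ f c.1 := by
  classical
  rw [← Finset.card_union_of_disjoint hd]
  apply card_le_comp
  intro v hv
  rcases Finset.mem_union.mp hv with hv | hv
  · exact h1 v hv
  · exact h2 v hv

lemma comp_eq_of_mem {c c' : Fin t} {v : VJ t f} (h : InComp c v) (h' : InComp c' v) :
    c = c' := by
  obtain ⟨i, rfl⟩ := h
  obtain ⟨i', h'⟩ := h'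
  exact congrArg Sigma.fst (Sum.inr_injective h')

lemma count3 {l : ℕ} (hl : 4 ≤ l) {f : ℕ → ℕ} {t : ℕ} (hf : Antitone f)
    (A S1 S2 : Finset (VJ t f)) (jA k1 k2 : Fin t)
    (hA : ∀ v ∈ A, InComp jA v) (h1 : ∀ v ∈ S1, InComp k1 v) (h2 : ∀ v ∈ S2, InComp k2 v)
    (dA1 : Disjoint A S1) (dA2 : Disjoint A S2) (d12 : Disjoint S1 S2)
    (cardA : A.card = l - 1) (cards : S1.card + S2.card = l - 2) :
    2 * l - 3 ≤ f 0 + f 1 ∨ (l - 1 ≤ f 0 ∧ l - 2 ≤ f 1 + f 2) := by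
  classical
  have hfA : l - 1 ≤ f jA.1 := cardA ▸ card_le_comp A jA hA
  have hf0A : f jA.1 ≤ f 0 := hf (Nat.zero_le _)
  by_cases hjA : 1 ≤ jA.1
  · have : f jA.1 ≤ f 1 := hf hjA
    left; omega
  · -- jA.1 = 0
    have hjA0 : jA.1 = 0 := by omega
    have hR : l - 1 ≤ f 0 := by omega
    have hb1 : S1.card ≤ f k1.1 := card_le_comp S1 k1 h1
    have hb2 : S2.card ≤ f k2.1 := card_le_comp S2 k2 h2
    by_cases hk1 : k1.1 = 0
    · have hk1A : k1 = jA := Fin.ext (by omega)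
      have hAS1 : A.card + S1.card ≤ f 0 := by
        have := union_card_le_comp A S1 jA dA1 hA (hk1A ▸ h1)
        omega
      by_cases hk2 : k2.1 = 0
      · left
        have hk2A : k2 = jA := Fin.ext (by omega)
        have hd : Disjoint (A ∪ S1) S2 := Finset.disjoint_union_left.mpr ⟨dA2, d12⟩
        have := union_card_le_comp (A ∪ S1) S2 jA hd ?h1 (hk2A ▸ h2)
        case h1 =>
          intro v hv
          rcases Finset.mem_union.mp hv with hv | hv
          · exact hA v hv
          · exact (hk1A ▸ h1) v hv
        rw [Finset.card_union_of_disjoint dA1] at this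
        omega
      · left
        have : f k2.1 ≤ f 1 := hf (by omega)
        omega
    · by_cases hk2 : k2.1 = 0
      · left
        have hk2A : k2 = jA := Fin.ext (by omega)
        have hAS2 : A.card + S2.card ≤ f 0 := by
          have := union_card_le_comp A S2 jA dA2 hA (hk2A ▸ h2)
          omega
        have : f k1.1 ≤ f 1 := hf (by omega)
        omega
      · -- both ≥ 1
        right
        refine ⟨hR, ?_⟩
        by_cases hkk : k1 = k2
        · have := union_card_le_comp S1 S2 k1 d12 h1 (hkk ▸ h2)
          have : f k1.1 ≤ f 1 := hf (by omega)
          omega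
        · have hpair := pair_bound12 hf (fun h => hkk (Fin.ext h)) (by omega) (by omega)
          omega

lemma cycle_has_hub {u : VJ t f} (c : (JG t f).Walk u u) (hc : c.IsCycle) :
    ∃ a : Fin 2, Sum.inl a ∈ c.support := by
  by_contra h
  push_neg at h
  apply no_H_cycle c hc
  intro v hv
  match v with
  | Sum.inr w => exact ⟨w, rfl⟩
  | Sum.inl a => exact absurd hv (h a)

lemma forward {l t : ℕ} {f : ℕ → ℕ} (hl : 4 ≤ l) (ht : 2 ≤ t) (hf : Antitone f)
    (h : ContainsCll (JG t f) l) :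
    2 * l - 3 ≤ f 0 + f 1 ∨ (l - 1 ≤ f 0 ∧ l - 2 ≤ f 1 + f 2) := by
  classical
  obtain ⟨u, c1, c2, hc1, hc2, hl1, hl2, hshare⟩ := h
  have ht0 : 0 < t := by omega
  match u with
  | Sum.inr w0 =>
    -- the shared vertex is a path vertex
    obtain ⟨a1, ha1⟩ := cycle_has_hub c1 hc1
    obtain ⟨a2, ha2⟩ := cycle_has_hub c2 hc2
    have hnd : ∀ b : Fin 2, Sum.inl b ∈ c1.support → Sum.inl b ∈ c2.support → False := by
      intro b h1 h2
      exact Sum.inl_ne_inr (hshare _ h1 h2)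
    have hone1 : ∀ b : Fin 2, Sum.inl b ∈ c1.support → b = a1 := by
      intro b hb
      by_contra hne
      have hv : a2.1 = b.1 ∨ a2.1 = a1.1 := by
        have := a2.is_lt; have := b.is_lt; have := a1.is_lt
        have : b.1 ≠ a1.1 := fun h => hne (Fin.ext h)
        omega
      rcases hv with hv | hv
      · exact hnd b hb (Fin.ext hv ▸ ha2)
      · exact hnd a1 ha1 (Fin.ext hv ▸ ha2)
    have hone2 : ∀ b : Fin 2, Sum.inl b ∈ c2.support → b = a2 := by
      intro b hb
      by_contra hne
      have hv : a1.1 = b.1 ∨ a1.1 = a2.1 := by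
        have := a1.is_lt; have := b.is_lt; have := a2.is_lt
        have : b.1 ≠ a2.1 := fun h => hne (Fin.ext h)
        omega
      rcases hv with hv | hv
      · exact hnd b (Fin.ext hv ▸ ha1) hb
      · exact hnd a2 (Fin.ext hv ▸ ha1) ha2
    obtain ⟨jA, A, hcardA, hcompA, hmemA⟩ := single_hub hc1 ha1 hone1
    obtain ⟨jB, B, hcardB, hcompB, hmemB⟩ := single_hub hc2 ha2 hone2
    have huA : Sum.inr w0 ∈ A := (hmemA _).mpr ⟨c1.start_mem_support, by simp⟩
    have huB : Sum.inr w0 ∈ B := (hmemB _).mpr ⟨c2.start_mem_support, by simp⟩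
    have hjAB : jA = jB := comp_eq_of_mem (hcompA _ huA) (hcompB _ huB)
    have hAB : A ∩ B = {Sum.inr w0} := by
      ext v
      rw [Finset.mem_inter, Finset.mem_singleton]
      constructor
      · rintro ⟨hvA, hvB⟩
        exact hshare v ((hmemA v).mp hvA).1 ((hmemB v).mp hvB).1
      · rintro rfl
        exact ⟨huA, huB⟩
    have hcard : (A ∪ B).card + 1 = A.card + B.card := by
      have := Finset.card_union_add_card_inter A B
      rw [hAB] at this
      simpa using this
    have hsub : (A ∪ B).card ≤ f jA.1 := by
      apply card_le_comp
      intro v hv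
      rcases Finset.mem_union.mp hv with hv | hv
      · exact hcompA v hv
      · exact hjAB ▸ hcompB v hv
    have : f jA.1 ≤ f 0 := hf (Nat.zero_le _)
    left
    omega
  | Sum.inl a =>
    have hu1 : Sum.inl a ∈ c1.support := c1.start_mem_support
    have hu2 : Sum.inl a ∈ c2.support := c2.start_mem_support
    obtain ⟨ob, hoba, hall2⟩ : ∃ ob : Fin 2, ob ≠ a ∧ ∀ x : Fin 2, x = a ∨ x = ob := by
      rcases fin2cases a with rfl | rfl
      · exact ⟨1, by decide, by decide⟩
      · exact ⟨0, by decide, by decide⟩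
    have hnotboth : ¬(Sum.inl ob ∈ c1.support ∧ Sum.inl ob ∈ c2.support) := by
      rintro ⟨h1, h2⟩
      exact hoba (Sum.inl_injective (hshare _ h1 h2))
    have h01sup : ∀ {cc : (JG t f).Walk (Sum.inl a) (Sum.inl a)},
        Sum.inl ob ∈ cc.support → (Sum.inl 0 ∈ cc.support ∧ Sum.inl 1 ∈ cc.support) := by
      intro cc hob
      have hacc : Sum.inl a ∈ cc.support := cc.start_mem_support
      rcases fin2cases a with rfl | rfl
      · have : ob = 1 := by
          rcases fin2cases ob with rfl | rfl
          · exact absurd rfl hoba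
          · rfl
        exact ⟨hacc, this ▸ hob⟩
      · have : ob = 0 := by
          rcases fin2cases ob with rfl | rfl
          · rfl
          · exact absurd rfl hoba
        exact ⟨this ▸ hob, hacc⟩
    rcases Classical.em (Sum.inl ob ∈ c1.support) with hob1 | hob1 <;>
      rcases Classical.em (Sum.inl ob ∈ c2.support) with hob2 | hob2
    · exact absurd ⟨hob1, hob2⟩ hnotboth
    · -- c1 has both hubs, c2 only a
      have hone2 : ∀ b : Fin 2, Sum.inl b ∈ c2.support → b = a := by
        intro b hb
        rcases hall2 b with rfl | rfl
        · rfl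
        · exact absurd hb hob2
      obtain ⟨jA, A, hcardA, hcompA, hmemA⟩ := single_hub hc2 hu2 hone2
      obtain ⟨k1, k2, S1, S2, hd12, hcards, hcomp1, hcomp2, hmemS⟩ :=
        two_hub ht0 hc1 (h01sup hob1).1 (h01sup hob1).2
      have hdA1 : Disjoint A S1 := by
        rw [Finset.disjoint_left]
        intro v hvA hvS
        obtain ⟨hv2, hvne⟩ := (hmemA v).mp hvA
        obtain ⟨hv1, -, -⟩ := hmemS v (Or.inl hvS)
        exact hvne (hshare v hv1 hv2)
      have hdA2 : Disjoint A S2 := by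
        rw [Finset.disjoint_left]
        intro v hvA hvS
        obtain ⟨hv2, hvne⟩ := (hmemA v).mp hvA
        obtain ⟨hv1, -, -⟩ := hmemS v (Or.inr hvS)
        exact hvne (hshare v hv1 hv2)
      exact count3 hl hf A S1 S2 jA k1 k2 hcompA hcomp1 hcomp2 hdA1 hdA2 hd12
        (by omega) (by omega)
    · -- c2 has both hubs, c1 only a
      have hone1 : ∀ b : Fin 2, Sum.inl b ∈ c1.support → b = a := by
        intro b hb
        rcases hall2 b with rfl | rfl
        · rfl
        · exact absurd hb hob1
      obtain ⟨jA, A, hcardA, hcompA, hmemA⟩ := single_hub hc1 hu1 hone1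
      obtain ⟨k1, k2, S1, S2, hd12, hcards, hcomp1, hcomp2, hmemS⟩ :=
        two_hub ht0 hc2 (h01sup hob2).1 (h01sup hob2).2
      have hdA1 : Disjoint A S1 := by
        rw [Finset.disjoint_left]
        intro v hvA hvS
        obtain ⟨hv1, hvne⟩ := (hmemA v).mp hvA
        obtain ⟨hv2, -, -⟩ := hmemS v (Or.inl hvS)
        exact hvne (hshare v hv1 hv2)
      have hdA2 : Disjoint A S2 := by
        rw [Finset.disjoint_left]
        intro v hvA hvS
        obtain ⟨hv1, hvne⟩ := (hmemA v).mp hvA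
        obtain ⟨hv2, -, -⟩ := hmemS v (Or.inr hvS)
        exact hvne (hshare v hv1 hv2)
      exact count3 hl hf A S1 S2 jA k1 k2 hcompA hcomp1 hcomp2 hdA1 hdA2 hd12
        (by omega) (by omega)
    · -- both single-hub at a
      have hone1 : ∀ b : Fin 2, Sum.inl b ∈ c1.support → b = a := by
        intro b hb
        rcases hall2 b with rfl | rfl
        · rfl
        · exact absurd hb hob1
      have hone2 : ∀ b : Fin 2, Sum.inl b ∈ c2.support → b = a := by
        intro b hb
        rcases hall2 b with rfl | rfl
        · rfl
        · exact absurd hb hob2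
      obtain ⟨jA, A, hcardA, hcompA, hmemA⟩ := single_hub hc1 hu1 hone1
      obtain ⟨jB, B, hcardB, hcompB, hmemB⟩ := single_hub hc2 hu2 hone2
      have hdAB : Disjoint A B := by
        rw [Finset.disjoint_left]
        intro v hvA hvB
        obtain ⟨hv1, hvne⟩ := (hmemA v).mp hvA
        obtain ⟨hv2, -⟩ := (hmemB v).mp hvB
        exact hvne (hshare v hv1 hv2)
      left
      by_cases hjj : jA = jB
      · have := union_card_le_comp A B jA hdAB hcompA (hjj ▸ hcompB)
        have h0 : f jA.1 ≤ f 0 := hf (Nat.zero_le _)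
        omega
      · have hA : l - 1 ≤ f jA.1 := by
          have := card_le_comp A jA hcompA
          omega
        have hB : l - 1 ≤ f jB.1 := by
          have := card_le_comp B jB hcompB
          omega
        have := pair_bound01 hf (fun h => hjj (Fin.ext h))
        omega

section Construction

variable (hpos : ∀ c : Fin t, 0 < f c.1)

/-- the `o`-th vertex of component `c` (clamped). -/
def vv (c : Fin t) (o : ℕ) : VJ t f :=
  Sum.inr ⟨c, ⟨min o (f c.1 - 1), by have := hpos c; omega⟩⟩

lemma vv_inj {c c' : Fin t} {o o' : ℕ} (ho : o < f c.1) (ho' : o' < f c'.1)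
    (h : vv hpos c o = vv hpos c' o') : c = c' ∧ o = o' := by
  simp only [vv, Sum.inr.injEq, Sigma.mk.inj_iff] at h
  obtain ⟨h1, h2⟩ := h
  subst h1
  refine ⟨rfl, ?_⟩
  have := eq_of_heq h2
  have := congrArg Fin.val this
  simp only [Fin.val] at this
  omega

lemma vv_adj {c : Fin t} {o : ℕ} (h : o + 1 < f c.1) :
    (JG t f).Adj (vv hpos c o) (vv hpos c (o + 1)) := by
  refine adjRR.mpr ⟨rfl, Or.inl ?_⟩
  simp only
  omega

lemma vv_ne_inl {c : Fin t} {o : ℕ} {a : Fin 2} : vv hpos c o ≠ Sum.inl a := by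
  simp [vv]

lemma adj_inl_vv {c : Fin t} {o : ℕ} {a : Fin 2} : (JG t f).Adj (Sum.inl a) (vv hpos c o) :=
  trivial

lemma adj_vv_inl {c : Fin t} {o : ℕ} {a : Fin 2} : (JG t f).Adj (vv hpos c o) (Sum.inl a) :=
  trivial

lemma run_walk (c : Fin t) : ∀ (a o : ℕ), o + a < f c.1 →
    ∃ w : (JG t f).Walk (vv hpos c o) (vv hpos c (o + a)),
      w.length = a ∧ w.support = (List.range (a + 1)).map (fun j => vv hpos c (o + j)) := by
  intro a
  induction a with
  | zero =>
    intro o ho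
    exact ⟨SimpleGraph.Walk.nil, by simp, by rw [show List.range 1 = [0] from rfl]; simp⟩
  | succ a ih =>
    intro o ho
    obtain ⟨w', hw'len, hw'sup⟩ := ih (o + 1) (by omega)
    have hadj : (JG t f).Adj (vv hpos c o) (vv hpos c (o + 1)) := vv_adj hpos (by omega)
    have hend : o + 1 + a = o + (a + 1) := by omega
    refine ⟨(SimpleGraph.Walk.cons hadj w').copy rfl (by rw [hend]), ?_, ?_⟩
    · simp [hw'len]
    · rw [SimpleGraph.Walk.support_copy, SimpleGraph.Walk.support_cons, hw'sup]
      have hr : List.range (a + 1 + 1) = 0 :: (List.range (a + 1)).map Nat.succ :=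
        List.range_succ_eq_map (n := a + 1)
      rw [hr, List.map_cons, List.map_map]
      congr 1
      apply List.map_congr_left
      intro j hj
      simp only [Function.comp_apply]
      congr 1
      omega

end Construction

section Construction2

variable (hpos : ∀ c : Fin t, 0 < f c.1)

lemma run_support_nodup (c : Fin t) (o a : ℕ) (h : o + a < f c.1) :
    ((List.range (a + 1)).map (fun j => vv hpos c (o + j))).Nodup := by
  refine List.Nodup.map_on ?_ List.nodup_range
  intro x hx y hy hxy
  rw [List.mem_range] at hx hy
  have := vv_inj hpos (show o + x < f c.1 by omega) (show o + y < f c.1 by omega) hxy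
  omega

lemma cyc1 (c : Fin t) (o n : ℕ) (hn : 2 ≤ n) (hon : o + n ≤ f c.1) :
    ∃ w : (JG t f).Walk (Sum.inl 0) (Sum.inl 0), w.IsCycle ∧ w.length = n + 1 ∧
      (∀ x, x ∈ w.support ↔ (x = Sum.inl 0 ∨ ∃ j, o ≤ j ∧ j < o + n ∧ x = vv hpos c j)) := by
  have hfc := hpos c
  obtain ⟨p, hplen, hpsup⟩ := run_walk hpos c (n - 1) o (by omega)
  set e1 : (JG t f).Walk (vv hpos c (o + (n - 1))) (Sum.inl 0) :=
    SimpleGraph.Walk.cons (adj_vv_inl hpos) SimpleGraph.Walk.nil with he1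
  set q := p.append e1 with hq
  have hqsup : q.support = p.support ++ [Sum.inl 0] := by
    rw [hq, SimpleGraph.Walk.support_append, he1]
    rfl
  have hinl0p : (Sum.inl 0 : VJ t f) ∉ p.support := by
    rw [hpsup]
    intro hmem
    obtain ⟨j, -, hj⟩ := List.mem_map.mp hmem
    exact vv_ne_inl hpos hj
  have hnd : q.support.Nodup := by
    rw [hqsup, List.nodup_append]
    refine ⟨hpsup ▸ run_support_nodup hpos c o (n - 1) (by omega), List.nodup_singleton _, ?_⟩
    intro x hx y hx' hxy
    subst hxy
    rw [List.mem_singleton] at hx'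
    exact hinl0p (hx' ▸ hx)
  have hqpath : q.IsPath := (SimpleGraph.Walk.isPath_def q).mpr hnd
  refine ⟨SimpleGraph.Walk.cons (adj_inl_vv hpos) q, ?_, ?_, ?_⟩
  · rw [SimpleGraph.Walk.cons_isCycle_iff]
    refine ⟨hqpath, ?_⟩
    intro hmem
    rw [hq, SimpleGraph.Walk.edges_append] at hmem
    rcases List.mem_append.mp hmem with hmem | hmem
    · exact hinl0p (SimpleGraph.Walk.fst_mem_support_of_mem_edges p hmem)
    · rw [he1] at hmem
      simp only [SimpleGraph.Walk.edges_cons, SimpleGraph.Walk.edges_nil,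
        List.mem_singleton] at hmem
      rw [Sym2.eq_iff] at hmem
      rcases hmem with ⟨h1, -⟩ | ⟨-, h2⟩
      · exact vv_ne_inl hpos h1.symm
      · obtain ⟨-, h3⟩ := vv_inj hpos (by omega) (by omega) h2
        omega
  · rw [SimpleGraph.Walk.length_cons, hq, SimpleGraph.Walk.length_append, hplen, he1]
    simp only [SimpleGraph.Walk.length_cons, SimpleGraph.Walk.length_nil]
    omega
  · intro x
    rw [SimpleGraph.Walk.support_cons, List.mem_cons, hqsup, List.mem_append,
      List.mem_singleton, hpsup]
    constructor
    · rintro (rfl | hx | rfl)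
      · exact Or.inl rfl
      · obtain ⟨j, hj, rfl⟩ := List.mem_map.mp hx
        rw [List.mem_range] at hj
        exact Or.inr ⟨o + j, by omega, by omega, rfl⟩
      · exact Or.inl rfl
    · rintro (rfl | ⟨j, hj1, hj2, rfl⟩)
      · exact Or.inl rfl
      · refine Or.inr (Or.inl (List.mem_map.mpr ⟨j - o, ?_, ?_⟩))
        · rw [List.mem_range]; omega
        · congr 1; omega

end Construction2

section Construction3

variable (hpos : ∀ c : Fin t, 0 < f c.1)

lemma adj_inl01 : (JG t f).Adj (Sum.inl 1) (Sum.inl 0) := by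
  show (⊤ : SimpleGraph (Fin 2)).Adj 1 0
  simp

lemma inl_ne_inl01 : (Sum.inl 0 : VJ t f) ≠ Sum.inl 1 := by
  simp [Fin.ext_iff]

lemma cyc2a (c : Fin t) (o a : ℕ) (ha : 1 ≤ a) (hoa : o + a ≤ f c.1) :
    ∃ w : (JG t f).Walk (Sum.inl 0) (Sum.inl 0), w.IsCycle ∧ w.length = a + 2 ∧
      (∀ x, x ∈ w.support ↔ (x = Sum.inl 0 ∨ x = Sum.inl 1 ∨
        ∃ j, o ≤ j ∧ j < o + a ∧ x = vv hpos c j)) := by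
  have hfc := hpos c
  obtain ⟨p, hplen, hpsup⟩ := run_walk hpos c (a - 1) o (by omega)
  set e1 : (JG t f).Walk (vv hpos c (o + (a - 1))) (Sum.inl 0) :=
    SimpleGraph.Walk.cons (adj_vv_inl hpos) (SimpleGraph.Walk.cons adj_inl01
      SimpleGraph.Walk.nil) with he1
  set q := p.append e1 with hq
  have hqsup : q.support = p.support ++ [Sum.inl 1, Sum.inl 0] := by
    rw [hq, SimpleGraph.Walk.support_append, he1]
    rfl
  have hinlp : ∀ b : Fin 2, (Sum.inl b : VJ t f) ∉ p.support := by
    intro b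
    rw [hpsup]
    intro hmem
    obtain ⟨j, -, hj⟩ := List.mem_map.mp hmem
    exact vv_ne_inl hpos hj
  have hnd : q.support.Nodup := by
    rw [hqsup, List.nodup_append]
    refine ⟨hpsup ▸ run_support_nodup hpos c o (a - 1) (by omega), ?_, ?_⟩
    · simp [Fin.ext_iff]
    · intro x hx y hx' hxy
      subst hxy
      rw [List.mem_cons, List.mem_singleton] at hx'
      rcases hx' with rfl | rfl
      · exact hinlp 1 hx
      · exact hinlp 0 hx
  have hqpath : q.IsPath := (SimpleGraph.Walk.isPath_def q).mpr hnd
  refine ⟨SimpleGraph.Walk.cons (adj_inl_vv hpos) q, ?_, ?_, ?_⟩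
  · rw [SimpleGraph.Walk.cons_isCycle_iff]
    refine ⟨hqpath, ?_⟩
    intro hmem
    rw [hq, SimpleGraph.Walk.edges_append] at hmem
    rcases List.mem_append.mp hmem with hmem | hmem
    · exact hinlp 0 (SimpleGraph.Walk.fst_mem_support_of_mem_edges p hmem)
    · rw [he1] at hmem
      simp only [SimpleGraph.Walk.edges_cons, SimpleGraph.Walk.edges_nil,
        List.mem_cons, List.mem_singleton, List.not_mem_nil, or_false] at hmem
      rcases hmem with hmem | hmem <;> rw [Sym2.eq_iff] at hmem
      · rcases hmem with ⟨h1, -⟩ | ⟨h1, -⟩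
        · exact vv_ne_inl hpos h1.symm
        · exact inl_ne_inl01 h1
      · rcases hmem with ⟨h1, -⟩ | ⟨-, h2⟩
        · exact inl_ne_inl01 h1
        · exact vv_ne_inl hpos h2
  · rw [SimpleGraph.Walk.length_cons, hq, SimpleGraph.Walk.length_append, hplen, he1]
    simp only [SimpleGraph.Walk.length_cons, SimpleGraph.Walk.length_nil]
    omega
  · intro x
    rw [SimpleGraph.Walk.support_cons, List.mem_cons, hqsup, List.mem_append, hpsup]
    simp only [List.mem_cons, List.mem_singleton, List.not_mem_nil, or_false]
    constructor
    · rintro (rfl | hx | rfl | rfl)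
      · exact Or.inl rfl
      · obtain ⟨j, hj, rfl⟩ := List.mem_map.mp hx
        rw [List.mem_range] at hj
        exact Or.inr (Or.inr ⟨o + j, by omega, by omega, rfl⟩)
      · exact Or.inr (Or.inl rfl)
      · exact Or.inl rfl
    · rintro (rfl | rfl | ⟨j, hj1, hj2, rfl⟩)
      · exact Or.inl rfl
      · exact Or.inr (Or.inr (Or.inl rfl))
      · refine Or.inr (Or.inl (List.mem_map.mpr ⟨j - o, ?_, ?_⟩))
        · rw [List.mem_range]; omega
        · congr 1; omega
end Construction3

section Construction4

variable (hpos : ∀ c : Fin t, 0 < f c.1)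

lemma cyc2b (c1 : Fin t) (o1 a : ℕ) (c2 : Fin t) (o2 b : ℕ)
    (ha : 1 ≤ a) (hb : 1 ≤ b) (h1 : o1 + a ≤ f c1.1) (h2 : o2 + b ≤ f c2.1)
    (hdisj : c1 ≠ c2 ∨ o1 + a ≤ o2 ∨ o2 + b ≤ o1) :
    ∃ w : (JG t f).Walk (Sum.inl 0) (Sum.inl 0), w.IsCycle ∧ w.length = a + b + 2 ∧
      (∀ x, x ∈ w.support ↔ (x = Sum.inl 0 ∨ x = Sum.inl 1 ∨
        (∃ j, o1 ≤ j ∧ j < o1 + a ∧ x = vv hpos c1 j) ∨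
        (∃ j, o2 ≤ j ∧ j < o2 + b ∧ x = vv hpos c2 j))) := by
  have hfc1 := hpos c1
  have hfc2 := hpos c2
  obtain ⟨p1, hp1len, hp1sup⟩ := run_walk hpos c1 (a - 1) o1 (by omega)
  obtain ⟨p2, hp2len, hp2sup⟩ := run_walk hpos c2 (b - 1) o2 (by omega)
  set e : (JG t f).Walk (vv hpos c2 (o2 + (b - 1))) (Sum.inl 0) :=
    SimpleGraph.Walk.cons (adj_vv_inl hpos) SimpleGraph.Walk.nil with he
  set u := p2.append e with hu
  set s : (JG t f).Walk (Sum.inl 1) (Sum.inl 0) :=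
    SimpleGraph.Walk.cons (adj_inl_vv hpos) u with hs
  set r : (JG t f).Walk (vv hpos c1 (o1 + (a - 1))) (Sum.inl 0) :=
    SimpleGraph.Walk.cons (adj_vv_inl hpos) s with hr
  set q := p1.append r with hq
  have husup : u.support = p2.support ++ [Sum.inl 0] := by
    rw [hu, SimpleGraph.Walk.support_append, he]; rfl
  have hqsup : q.support = p1.support ++ (Sum.inl 1 :: (p2.support ++ [Sum.inl 0])) := by
    rw [hq, SimpleGraph.Walk.support_append, hr, SimpleGraph.Walk.support_cons, hs,
      SimpleGraph.Walk.support_cons, List.tail_cons, husup]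
  have hinlp1 : ∀ bb : Fin 2, (Sum.inl bb : VJ t f) ∉ p1.support := by
    intro bb
    rw [hp1sup]
    intro hmem
    obtain ⟨j, -, hj⟩ := List.mem_map.mp hmem
    exact vv_ne_inl hpos hj
  have hinlp2 : ∀ bb : Fin 2, (Sum.inl bb : VJ t f) ∉ p2.support := by
    intro bb
    rw [hp2sup]
    intro hmem
    obtain ⟨j, -, hj⟩ := List.mem_map.mp hmem
    exact vv_ne_inl hpos hj
  have hp1p2 : ∀ x, x ∈ p1.support → x ∈ p2.support → False := by
    intro x hx1 hx2
    rw [hp1sup] at hx1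
    rw [hp2sup] at hx2
    obtain ⟨j, hj, rfl⟩ := List.mem_map.mp hx1
    obtain ⟨j', hj', heq⟩ := List.mem_map.mp hx2
    rw [List.mem_range] at hj hj'
    obtain ⟨hc, ho⟩ := vv_inj hpos (by omega) (by omega) heq.symm
    rcases hdisj with hd | hd | hd
    · exact hd hc
    · omega
    · omega
  have hnd : q.support.Nodup := by
    rw [hqsup, List.nodup_append]
    refine ⟨hp1sup ▸ run_support_nodup hpos c1 o1 (a - 1) (by omega), ?_, ?_⟩
    · rw [List.nodup_cons]
      constructor
      · intro hx
        rcases List.mem_append.mp hx with hx | hx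
        · exact hinlp2 1 hx
        · rw [List.mem_singleton] at hx
          exact inl_ne_inl01 hx.symm
      · rw [List.nodup_append]
        refine ⟨hp2sup ▸ run_support_nodup hpos c2 o2 (b - 1) (by omega),
          List.nodup_singleton _, ?_⟩
        intro x hx y hx' hxy
        subst hxy
        rw [List.mem_singleton] at hx'
        exact hinlp2 0 (hx' ▸ hx)
    · intro x hx y hx' hxy
      subst hxy
      rw [List.mem_cons] at hx'
      rcases hx' with rfl | hx'
      · exact hinlp1 1 hx
      · rcases List.mem_append.mp hx' with hx' | hx'
        · exact hp1p2 x hx hx'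
        · rw [List.mem_singleton] at hx'
          exact hinlp1 0 (hx' ▸ hx)
  have hqpath : q.IsPath := (SimpleGraph.Walk.isPath_def q).mpr hnd
  refine ⟨SimpleGraph.Walk.cons (adj_inl_vv hpos) q, ?_, ?_, ?_⟩
  · rw [SimpleGraph.Walk.cons_isCycle_iff]
    refine ⟨hqpath, ?_⟩
    intro hmem
    rw [hq, SimpleGraph.Walk.edges_append] at hmem
    rcases List.mem_append.mp hmem with hmem | hmem
    · exact hinlp1 0 (SimpleGraph.Walk.fst_mem_support_of_mem_edges p1 hmem)
    · rw [hr, SimpleGraph.Walk.edges_cons, hs, SimpleGraph.Walk.edges_cons, hu,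
        SimpleGraph.Walk.edges_append, he, SimpleGraph.Walk.edges_cons,
        SimpleGraph.Walk.edges_nil] at hmem
      rw [List.mem_cons, List.mem_cons, List.mem_append] at hmem
      rcases hmem with hmem | hmem | hmem | hmem
      · rw [Sym2.eq_iff] at hmem
        rcases hmem with ⟨hh, -⟩ | ⟨hh, -⟩
        · exact vv_ne_inl hpos hh.symm
        · exact inl_ne_inl01 hh
      · rw [Sym2.eq_iff] at hmem
        rcases hmem with ⟨hh, -⟩ | ⟨-, hh⟩
        · exact inl_ne_inl01 hh
        · exact vv_ne_inl hpos hh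
      · exact hinlp2 0 (SimpleGraph.Walk.fst_mem_support_of_mem_edges p2 hmem)
      · rw [List.mem_singleton, Sym2.eq_iff] at hmem
        rcases hmem with ⟨hh, -⟩ | ⟨-, hh⟩
        · exact vv_ne_inl hpos hh.symm
        · obtain ⟨hc, ho⟩ := vv_inj hpos (by omega) (by omega) hh
          rcases hdisj with hd | hd | hd
          · exact hd hc
          · omega
          · omega
  · rw [SimpleGraph.Walk.length_cons, hq, SimpleGraph.Walk.length_append, hp1len, hr,
      SimpleGraph.Walk.length_cons, hs, SimpleGraph.Walk.length_cons, hu,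
      SimpleGraph.Walk.length_append, hp2len, he]
    simp only [SimpleGraph.Walk.length_cons, SimpleGraph.Walk.length_nil]
    omega
  · intro x
    rw [SimpleGraph.Walk.support_cons, List.mem_cons, hqsup, List.mem_append,
      List.mem_cons, List.mem_append, List.mem_singleton, hp1sup, hp2sup]
    constructor
    · rintro (rfl | hx | rfl | hx | rfl)
      · exact Or.inl rfl
      · obtain ⟨j, hj, rfl⟩ := List.mem_map.mp hx
        rw [List.mem_range] at hj
        exact Or.inr (Or.inr (Or.inl ⟨o1 + j, by omega, by omega, rfl⟩))
      · exact Or.inr (Or.inl rfl)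
      · obtain ⟨j, hj, rfl⟩ := List.mem_map.mp hx
        rw [List.mem_range] at hj
        exact Or.inr (Or.inr (Or.inr ⟨o2 + j, by omega, by omega, rfl⟩))
      · exact Or.inl rfl
    · rintro (rfl | rfl | ⟨j, hj1, hj2, rfl⟩ | ⟨j, hj1, hj2, rfl⟩)
      · exact Or.inl rfl
      · exact Or.inr (Or.inr (Or.inl rfl))
      · refine Or.inr (Or.inl (List.mem_map.mpr ⟨j - o1, ?_, ?_⟩))
        · rw [List.mem_range]; omega
        · congr 1; omega
      · refine Or.inr (Or.inr (Or.inr (Or.inl (List.mem_map.mpr ⟨j - o2, ?_, ?_⟩))))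
        · rw [List.mem_range]; omega
        · congr 1; omega

end Construction4

lemma backward {l : ℕ} (hl : 4 ≤ l) (ht : 2 ≤ t) (hf : Antitone f)
    (hft : ∀ i, 1 ≤ f i ↔ i < t)
    (h : 2 * l - 3 ≤ f 0 + f 1 ∨ (f 0 + f 1 ≤ 2 * l - 4 ∧ l - 1 ≤ f 0 ∧ l - 2 ≤ f 1 + f 2)) :
    ContainsCll (JG t f) l := by
  classical
  have hpos : ∀ c : Fin t, 0 < f c.1 := fun c => (hft c.1).mpr c.2
  have hf10 : f 1 ≤ f 0 := hf (by omega)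
  have hf0 : l - 1 ≤ f 0 := by
    rcases h with h | h
    · omega
    · exact h.2.1
  set comp0 : Fin t := ⟨0, by omega⟩ with hcomp0
  set comp1 : Fin t := ⟨1, by omega⟩ with hcomp1
  have hfc0 : f comp0.1 = f 0 := rfl
  have hfc1 : f comp1.1 = f 1 := rfl
  have hne01 : comp0 ≠ comp1 := by
    intro hh
    have := congrArg Fin.val hh
    simp [hcomp0, hcomp1] at this
  obtain ⟨w1, hw1c, hw1l, hw1s⟩ := cyc1 hpos comp0 0 (l - 1) (by omega) (by omega)
  have hw1len : w1.length = l := by omega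
  -- helper for the sharing condition
  have hshare1 : ∀ v ∈ w1.support, v = Sum.inl 0 ∨ ∃ j, j < l - 1 ∧ v = vv hpos comp0 j := by
    intro v hv
    rcases (hw1s v).mp hv with rfl | ⟨j, hj1, hj2, rfl⟩
    · exact Or.inl rfl
    · exact Or.inr ⟨j, by omega, rfl⟩
  rcases h with hP | ⟨hP', hR, hS⟩
  · -- f 0 + f 1 ≥ 2l - 3
    by_cases hr : l - 2 ≤ f 0 - (l - 1)
    · -- second cycle entirely inside component 0
      obtain ⟨w2, hw2c, hw2l, hw2s⟩ := cyc2a hpos comp0 (l - 1) (l - 2) (by omega) (by omega)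
      have hw2len : w2.length = l := by omega
      refine ⟨Sum.inl 0, w1, w2, hw1c, hw2c, hw1len, hw2len, ?_⟩
      intro v hv1 hv2
      rcases hshare1 v hv1 with rfl | ⟨j, hj, rfl⟩
      · rfl
      · exfalso
        rcases (hw2s _).mp hv2 with h' | h' | ⟨j', hj'1, hj'2, h'⟩
        · exact vv_ne_inl hpos h'
        · exact vv_ne_inl hpos h'
        · obtain ⟨-, hoo⟩ := vv_inj hpos (by omega) (by omega) h'
          omega
    · by_cases hr1 : 1 ≤ f 0 - (l - 1)
      · -- split between component 0 (above the first run) and component 1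
        obtain ⟨w2, hw2c, hw2l, hw2s⟩ := cyc2b hpos comp0 (l - 1) (f 0 - (l - 1))
          comp1 0 (l - 2 - (f 0 - (l - 1))) (by omega) (by omega) (by omega) (by omega)
          (Or.inl hne01)
        have hw2len : w2.length = l := by omega
        refine ⟨Sum.inl 0, w1, w2, hw1c, hw2c, hw1len, hw2len, ?_⟩
        intro v hv1 hv2
        rcases hshare1 v hv1 with rfl | ⟨j, hj, rfl⟩
        · rfl
        · exfalso
          rcases (hw2s _).mp hv2 with h' | h' | ⟨j', hj'1, hj'2, h'⟩ | ⟨j', hj'1, hj'2, h'⟩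
          · exact vv_ne_inl hpos h'
          · exact vv_ne_inl hpos h'
          · obtain ⟨-, hoo⟩ := vv_inj hpos (by omega) (by omega) h'
            omega
          · obtain ⟨hcc, -⟩ := vv_inj hpos (by omega) (by omega) h'
            exact hne01 hcc
      · -- f 0 = l - 1, so f 1 ≥ l - 2 : second cycle in component 1
        obtain ⟨w2, hw2c, hw2l, hw2s⟩ := cyc2a hpos comp1 0 (l - 2) (by omega) (by omega)
        have hw2len : w2.length = l := by omega
        refine ⟨Sum.inl 0, w1, w2, hw1c, hw2c, hw1len, hw2len, ?_⟩
        intro v hv1 hv2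
        rcases hshare1 v hv1 with rfl | ⟨j, hj, rfl⟩
        · rfl
        · exfalso
          rcases (hw2s _).mp hv2 with h' | h' | ⟨j', hj'1, hj'2, h'⟩
          · exact vv_ne_inl hpos h'
          · exact vv_ne_inl hpos h'
          · obtain ⟨hcc, -⟩ := vv_inj hpos (by omega) (by omega) h'
            exact hne01 hcc
  · -- second alternative
    by_cases hf1 : l - 2 ≤ f 1
    · obtain ⟨w2, hw2c, hw2l, hw2s⟩ := cyc2a hpos comp1 0 (l - 2) (by omega) (by omega)
      have hw2len : w2.length = l := by omega
      refine ⟨Sum.inl 0, w1, w2, hw1c, hw2c, hw1len, hw2len, ?_⟩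
      intro v hv1 hv2
      rcases hshare1 v hv1 with rfl | ⟨j, hj, rfl⟩
      · rfl
      · exfalso
        rcases (hw2s _).mp hv2 with h' | h' | ⟨j', hj'1, hj'2, h'⟩
        · exact vv_ne_inl hpos h'
        · exact vv_ne_inl hpos h'
        · obtain ⟨hcc, -⟩ := vv_inj hpos (by omega) (by omega) h'
          exact hne01 hcc
    · -- need component 2
      have hf2 : 1 ≤ f 2 := by omega
      have ht2 : 2 < t := (hft 2).mp hf2
      set comp2 : Fin t := ⟨2, ht2⟩ with hcomp2
      have hfc2 : f comp2.1 = f 2 := rfl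
      have hne12 : comp1 ≠ comp2 := by
        intro hh
        have := congrArg Fin.val hh
        simp [hcomp1, hcomp2] at this
      have hne02 : comp0 ≠ comp2 := by
        intro hh
        have := congrArg Fin.val hh
        simp [hcomp0, hcomp2] at this
      have hf1pos : 1 ≤ f 1 := (hft 1).mpr (by omega)
      obtain ⟨w2, hw2c, hw2l, hw2s⟩ := cyc2b hpos comp1 0 (f 1) comp2 0 (l - 2 - f 1)
        (by omega) (by omega) (by omega) (by omega) (Or.inl hne12)
      have hw2len : w2.length = l := by omega
      refine ⟨Sum.inl 0, w1, w2, hw1c, hw2c, hw1len, hw2len, ?_⟩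
      intro v hv1 hv2
      rcases hshare1 v hv1 with rfl | ⟨j, hj, rfl⟩
      · rfl
      · exfalso
        rcases (hw2s _).mp hv2 with h' | h' | ⟨j', hj'1, hj'2, h'⟩ | ⟨j', hj'1, hj'2, h'⟩
        · exact vv_ne_inl hpos h'
        · exact vv_ne_inl hpos h'
        · obtain ⟨hcc, -⟩ := vv_inj hpos (by omega) (by omega) h'
          exact hne01 hcc
        · obtain ⟨hcc, -⟩ := vv_inj hpos (by omega) (by omega) h'
          exact hne02 hcc

theorem stmt6 (l t : ℕ) (hl : 4 ≤ l) (ht : 2 ≤ t) (f : ℕ → ℕ) (hf : Antitone f)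
    (hft : ∀ i, 1 ≤ f i ↔ i < t) :
    ContainsCll (joinG (⊤ : SimpleGraph (Fin 2)) (pathsUnion t f)) l ↔
      (2 * l - 3 ≤ f 0 + f 1 ∨
        (f 0 + f 1 ≤ 2 * l - 4 ∧ l - 1 ≤ f 0 ∧ l - 2 ≤ f 1 + f 2)) := by
  constructor
  · intro h
    rcases forward hl ht hf h with h1 | ⟨hR, hS⟩
    · exact Or.inl h1
    · by_cases hP : 2 * l - 3 ≤ f 0 + f 1
      · exact Or.inl hP
      · exact Or.inr ⟨by omega, hR, hS⟩
  · intro h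
    exact backward hl ht hf hft (by tauto)
end

section
/- Let k ≥ 5 and let G be a planar graph on vertex set {u₁, u₂} ∪ B with every vertex of B adjacent to both u₁ and u₂, such that G contains no Theta graph on k vertices. If G[B] is a disjoint union of paths with longest path of order n₁, then n₁ ≤ k−4. -/
open SimpleGraph

theorem stmt13 (k : ℕ) (hk : 5 ≤ k) {B : Type*} [Fintype B]
    (G : SimpleGraph (Fin 2 ⊕ B)) (hpl : IsPlanar G)
    (hcard : k - 2 ≤ Fintype.card B)
    (hspan : ∀ (i : Fin 2) (v : B), G.Adj (Sum.inl i) (Sum.inr v))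
    (hfree : ¬ ContainsTheta G k)
    (hacyc : (G.induce (Set.range Sum.inr)).IsAcyclic)
    (hdeg : ∀ v : B, {w : B | G.Adj (Sum.inr v) (Sum.inr w)}.ncard ≤ 2) :
    ¬ Contains (G.induce (Set.range Sum.inr)) (SimpleGraph.pathGraph (k - 3)) := by
  rintro ⟨f, hf⟩
  classical
  -- extract underlying B-vertices of the path
  have hbex : ∀ i : Fin (k-3), ∃ v : B, Sum.inr v = ((f i) : Fin 2 ⊕ B) := fun i => (f i).2
  choose b hb using hbex
  have hbinj : Function.Injective b := by
    intro i j hij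
    apply f.injective
    apply Subtype.ext
    rw [← hb i, ← hb j, hij]
  have hadj : ∀ i j : Fin (k-3), (SimpleGraph.pathGraph (k-3)).Adj i j →
      G.Adj (Sum.inr (b i)) (Sum.inr (b j)) := by
    intro i j h
    have h2 : G.Adj ((f i) : Fin 2 ⊕ B) ((f j) : Fin 2 ⊕ B) := hf i j h
    rw [hb i, hb j]; exact h2
  -- extra vertex x not among b's
  have hxlt : (Finset.univ.image b).card < Fintype.card B := by
    calc (Finset.univ.image b).card ≤ Fintype.card (Fin (k-3)) := Finset.card_image_le.trans (by simp)
    _ = k - 3 := by simp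
    _ < Fintype.card B := by omega
  have hex : ∃ x : B, x ∉ Finset.univ.image b := by
    by_contra h
    push_neg at h
    have he : (Finset.univ.image b) = Finset.univ := Finset.eq_univ_iff_forall.mpr h
    rw [he, Finset.card_univ] at hxlt
    omega
  obtain ⟨x, hx⟩ := hex
  have hxb : ∀ i, b i ≠ x := by
    intro i h
    exact hx (Finset.mem_image.mpr ⟨i, Finset.mem_univ _, h⟩)
  -- the embedding of the theta graph, via a helper on ℕ
  set g' : ℕ → (Fin 2 ⊕ B) := fun n =>
    if h : 1 ≤ n ∧ n ≤ k - 3 then Sum.inr (b ⟨n - 1, by omega⟩)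
    else if n = k - 2 then Sum.inl 1
    else if n = k - 1 then Sum.inr x
    else Sum.inl 0 with hg'
  have g'0 : g' 0 = Sum.inl 0 := by
    simp only [hg']
    rw [dif_neg (by omega), if_neg (by omega), if_neg (by omega)]
  have g'mid : ∀ n, 1 ≤ n → n ≤ k - 3 → ∀ (hb' : n - 1 < k - 3),
      g' n = Sum.inr (b ⟨n - 1, hb'⟩) := by
    intro n h1 h2 hb'
    simp only [hg']
    rw [dif_pos ⟨h1, h2⟩]
  have g'k2 : g' (k - 2) = Sum.inl 1 := by
    simp only [hg']
    rw [dif_neg (by omega)]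
    simp
  have g'k1 : g' (k - 1) = Sum.inr x := by
    simp only [hg']
    rw [dif_neg (by omega), if_neg (by omega)]
    simp
  have hchar : ∀ n, n < k →
      (n = 0 ∧ g' n = Sum.inl 0) ∨
      (∃ (h1 : 1 ≤ n) (h2 : n - 1 < k - 3), n ≤ k - 3 ∧ g' n = Sum.inr (b ⟨n - 1, h2⟩)) ∨
      (n = k - 2 ∧ g' n = Sum.inl 1) ∨ (n = k - 1 ∧ g' n = Sum.inr x) := by
    intro n hn
    rcases Nat.lt_or_ge n 1 with h | h
    · left; exact ⟨by omega, by rw [show n = 0 by omega]; exact g'0⟩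
    rcases Nat.lt_or_ge n (k - 2) with h2 | h2
    · right; left; exact ⟨h, by omega, by omega, g'mid n h (by omega) (by omega)⟩
    rcases Nat.lt_or_ge n (k - 1) with h3 | h3
    · right; right; left
      exact ⟨by omega, by rw [show n = k - 2 by omega]; exact g'k2⟩
    · right; right; right
      exact ⟨by omega, by rw [show n = k - 1 by omega]; exact g'k1⟩
  set g : Fin k → (Fin 2 ⊕ B) := fun i => g' (i : ℕ) with hg
  have ginj : Function.Injective g := by
    intro i j hij
    have hi := i.2; have hj := j.2
    simp only [hg] at hij
    apply Fin.ext
    rcases hchar (i : ℕ) hi with ⟨e1, e2⟩ | ⟨e1, e1', e1'', e2⟩ | ⟨e1, e2⟩ | ⟨e1, e2⟩ <;>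
      rcases hchar (j : ℕ) hj with ⟨f1, f2⟩ | ⟨f1, f1', f1'', f2⟩ | ⟨f1, f2⟩ | ⟨f1, f2⟩ <;>
      rw [e2, f2] at hij <;>
      first
      | omega
      | (have h2 := hbinj (Sum.inr.inj hij); simp only [Fin.mk.injEq] at h2; omega)
      | (exfalso; exact hxb _ (Sum.inr.inj hij))
      | (exfalso; exact hxb _ (Sum.inr.inj hij.symm))
      | (exact absurd hij (by simp [Fin.ext_iff]))
  have key : ∀ i j : Fin k, ((j : ℕ) = (i : ℕ) + 1 ∨ ((i : ℕ) = k - 1 ∧ (j : ℕ) = 0)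
      ∨ ((i : ℕ) = 0 ∧ (j : ℕ) = 2)) → G.Adj (g i) (g j) := by
    intro i j hrel
    have hi := i.2; have hj := j.2
    simp only [hg]
    rcases hrel with h | ⟨h1, h2⟩ | ⟨h1, h2⟩
    · -- j = i + 1
      rcases Nat.lt_or_ge (i : ℕ) 1 with hc | hc
      · -- i = 0, j = 1
        rw [show (i : ℕ) = 0 by omega, show (j : ℕ) = 1 by omega, g'0,
          g'mid 1 le_rfl (by omega) (by omega)]
        exact hspan 0 _
      rcases Nat.lt_or_ge ((i : ℕ) + 1) (k - 2) with hc2 | hc2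
      · -- both in path
        rw [h, g'mid (i : ℕ) hc (by omega) (by omega),
          g'mid ((i : ℕ) + 1) (by omega) (by omega) (by omega)]
        apply hadj
        rw [SimpleGraph.pathGraph_adj]
        left; simp; omega
      rcases Nat.lt_or_ge ((i : ℕ) + 1) (k - 1) with hc3 | hc3
      · -- i = k-3, j = k-2
        rw [show (i : ℕ) = k - 3 by omega, show (j : ℕ) = k - 2 by omega,
          g'mid (k - 3) (by omega) le_rfl (by omega), g'k2]
        exact (hspan 1 _).symm
      · -- i = k-2, j = k-1
        rw [show (i : ℕ) = k - 2 by omega, show (j : ℕ) = k - 1 by omega, g'k2, g'k1]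
        exact hspan 1 x
    · -- wrap: i = k-1, j = 0
      rw [h1, h2, g'k1, g'0]
      exact (hspan 0 x).symm
    · -- chord: i = 0, j = 2
      rw [h1, h2, g'0, g'mid 2 (by omega) (by omega) (by omega)]
      exact hspan 0 _
  apply hfree
  refine ⟨2, le_rfl, by omega, ⟨g, ginj⟩, ?_⟩
  intro p q hpq
  rw [thetaGraph, SimpleGraph.fromRel_adj] at hpq
  rcases hpq.2 with h | h
  · exact key p q h
  · exact (key q p h).symm
end
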